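/- Let c ∈ ℂ and R = ℂ[t, t^{-1}, u | u² = t⁴ − 2ct² + 1]. Let (P_{−4,k})_{k ≥ −4} and (P_{−2,k})_{k ≥ −4} be the sequences of complex numbers each satisfying the recursion (6+2k)P_k = 4kc·P_{k−2} − 2(k−3)·P_{k−4} for k ≥ 0, with initial values P_{−4,−4} = 1, P_{−4,−3} = P_{−4,−2} = P_{−4,−1} = 0 and P_{−2,−2} = 1, P_{−2,−4} = P_{−2,−3} = P_{−2,−1} = 0 respectively. Then for every even integer l ≤ −6, in Ω¹_R/dR one has (class of t^l u dt) = P_{−4,−l−4}·ω_{−4} + P_{−2,−l−4}·ω_{−2}. -/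

import Mathlib

noncomputable section
open Polynomial LaurentPolynomial

/-- The ring `R = ℂ[t,t⁻¹][u]/(u² − (t⁴ − 2ct² + 1))`, realized by adjoining a root `u`
of `X² − (t⁴ − 2ct² + 1)` to the ring of Laurent polynomials `ℂ[t,t⁻¹]`. -/
abbrev DJKM (c : ℂ) : Type :=
  AdjoinRoot ((X : Polynomial (LaurentPolynomial ℂ)) ^ 2 -
    Polynomial.C (T 4 - 2 * LaurentPolynomial.C c * T 2 + 1))

/-- The element `t^i` of `R`, for `i : ℤ`. -/
def tp (c : ℂ) (i : ℤ) : DJKM c := AdjoinRoot.of _ (T i)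

/-- The element `u` of `R`. -/
def uu (c : ℂ) : DJKM c := AdjoinRoot.root _

/-- The subspace `dR ⊆ Ω¹_R` of exact differentials. -/
def dR (c : ℂ) : Submodule ℂ (KaehlerDifferential ℂ (DJKM c)) :=
  LinearMap.range (KaehlerDifferential.D ℂ (DJKM c)).toLinearMap

/-- The class of `f·dg` in `Ω¹_R/dR`. -/
def cls (c : ℂ) (f g : DJKM c) : KaehlerDifferential ℂ (DJKM c) ⧸ dR c :=
  Submodule.Quotient.mk (f • KaehlerDifferential.D ℂ (DJKM c) g)

/-- `ω_k` : the class of `t^k·u·dt` in `Ω¹_R/dR`. -/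
def w (c : ℂ) (k : ℤ) : KaehlerDifferential ℂ (DJKM c) ⧸ dR c :=
  cls c (tp c k * uu c) (tp c 1)

/-- `ω₀` : the class of `t⁻¹·dt` in `Ω¹_R/dR`. -/
def w0 (c : ℂ) : KaehlerDifferential ℂ (DJKM c) ⧸ dR c :=
  cls c (tp c (-1)) (tp c 1)

variable (c : ℂ)

local notation "am" => algebraMap ℂ (DJKM c)
local notation "DD" => KaehlerDifferential.D ℂ (DJKM c)

lemma tp_mul (i j : ℤ) : tp c i * tp c j = tp c (i+j) := by
  rw [tp, tp, tp, T_add, map_mul]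

lemma tp_zero : tp c 0 = 1 := by rw [tp, T_zero, map_one]

lemma am_eq (z : ℂ) : am z = AdjoinRoot.of _ (LaurentPolynomial.C z) := rfl

lemma uu_sq : uu c * uu c = tp c 4 - am (2*c) * tp c 2 + 1 := by
  have h := AdjoinRoot.eval₂_root ((X : Polynomial (LaurentPolynomial ℂ)) ^ 2 -
    Polynomial.C (T 4 - 2 * LaurentPolynomial.C c * T 2 + 1))
  simp only [eval₂_sub, eval₂_pow, eval₂_X, Polynomial.eval₂_C, sub_eq_zero] at h
  rw [uu, ← sq, h, map_add, map_sub, map_mul, map_mul, map_one,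
    map_mul (algebraMap ℂ (DJKM c)), map_ofNat, map_ofNat, tp, tp, am_eq]

lemma D_tp (i : ℤ) : DD (tp c i) = (am (i:ℂ) * tp c (i-1)) • DD (tp c 1) := by
  have step : ∀ j : ℤ, DD (tp c (j+1)) = tp c j • DD (tp c 1) + tp c 1 • DD (tp c j) := by
    intro j; rw [← tp_mul, Derivation.leibniz]
  have inv : ∀ (x y : KaehlerDifferential ℂ (DJKM c)), tp c 1 • x = y → x = tp c (-1) • y := by
    intro x y h
    rw [← h, smul_smul, tp_mul]
    norm_num [tp_zero, one_smul]
  induction i using Int.induction_on with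
  | zero => simp [tp_zero, Derivation.map_one_eq_zero, map_zero, zero_smul]
  | succ n ih =>
      push_cast at ih ⊢
      rw [show ((n:ℤ) + 1 - 1 : ℤ) = n by ring, step, ih, smul_smul, ← add_smul]
      congr 1
      rw [mul_left_comm, tp_mul, show (1 + ((n:ℤ)-1) : ℤ) = n by ring]
      ring
  | pred n ih =>
      push_cast at ih ⊢
      have h := step (-n - 1)
      rw [show (-(n:ℤ) - 1 + 1 : ℤ) = -n by ring, ih] at h
      have h2 : tp c 1 • DD (tp c (-(n:ℤ)-1)) =
          (-(n : DJKM c) * tp c (-(n:ℤ)-1)) • DD (tp c 1)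
            - tp c (-(n:ℤ)-1) • DD (tp c 1) := by
        rw [eq_sub_iff_add_eq, h]; abel
      rw [inv _ _ h2, smul_sub, smul_smul, smul_smul, mul_left_comm, tp_mul,
        show (-1 + (-(n:ℤ)-1) : ℤ) = -n - 1 - 1 by ring, ← sub_smul]
      congr 1
      ring

lemma csmul (z : ℂ) (r : DJKM c) (x : KaehlerDifferential ℂ (DJKM c)) :
    z • (r • x) = (am z * r) • x := by
  rw [mul_smul, algebraMap_smul]

lemma hDF : DD (uu c * uu c) = (am 4 * tp c 3 - am (2*c) * (am 2 * tp c 1)) • DD (tp c 1) := by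
  rw [uu_sq]
  simp only [map_add, map_sub, Derivation.map_one_eq_zero, add_zero]
  rw [Derivation.leibniz, Derivation.map_algebraMap, smul_zero, add_zero, D_tp c 4,
    D_tp c 2, smul_smul, ← sub_smul]
  norm_num

lemma huDu : uu c • DD (uu c) = (am 2 * tp c 3 - am (2*c) * tp c 1) • DD (tp c 1) := by
  have h : DD (uu c * uu c) = (2:ℂ) • (uu c • DD (uu c)) := by
    rw [Derivation.leibniz, two_smul]
  have h2 : uu c • DD (uu c) = (2⁻¹:ℂ) • DD (uu c * uu c) := by
    rw [h, smul_smul]; norm_num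
  rw [h2, hDF, csmul]
  congr 1
  rw [mul_sub]
  simp only [← mul_assoc, ← map_mul]
  rw [show (2⁻¹ * 4 : ℂ) = 2 by norm_num, show (2⁻¹ * 2 * c * 2 : ℂ) = 2*c by ring]

lemma hg (k : ℤ) : DD (tp c k * (uu c * uu c) * uu c)
    = (((am (k:ℂ) + 6) * tp c (k+3) - am (2*c) * ((am (k:ℂ) + 3) * tp c (k+1))
        + am (k:ℂ) * tp c (k-1)) * uu c) • DD (tp c 1) := by
  have e1 : tp c k * tp c 3 = tp c (k+3) := tp_mul c k 3
  have e2 : tp c k * tp c 1 = tp c (k+1) := tp_mul c k 1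
  have e3 : tp c (k-1) * tp c 4 = tp c (k+3) := by
    rw [tp_mul, show k-1+4 = k+3 by ring]
  have e4 : tp c (k-1) * tp c 2 = tp c (k+1) := by
    rw [tp_mul, show k-1+2 = k+1 by ring]
  rw [Derivation.leibniz, Derivation.leibniz, hDF, D_tp c k, mul_smul, mul_smul, huDu]
  simp only [smul_add, smul_smul, ← add_smul]
  congr 1
  simp only [map_ofNat]
  linear_combination (am (k:ℂ) * tp c (k-1) * uu c) * uu_sq c + (6 * uu c) * e1
    - (3 * am (2*c) * uu c) * e2 + (am (k:ℂ) * uu c) * e3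
    - (am (k:ℂ) * am (2*c) * uu c) * e4

set_option synthInstance.maxHeartbeats 1000000 in
set_option maxHeartbeats 1000000 in
lemma rel (k : ℤ) :
    ((k:ℂ)+6) • w c (k+3) = (2*c*((k:ℂ)+3)) • w c (k+1) - (k:ℂ) • w c (k-1) := by
  simp only [w, cls]
  rw [eq_sub_iff_add_eq, ← Submodule.Quotient.mk_smul,
    ← Submodule.Quotient.mk_smul, ← Submodule.Quotient.mk_smul,
    ← Submodule.Quotient.mk_add, ← sub_eq_zero, ← Submodule.Quotient.mk_sub,
    Submodule.Quotient.mk_eq_zero]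
  refine ⟨tp c k * (uu c * uu c) * uu c, ?_⟩
  show DD (tp c k * (uu c * uu c) * uu c) = _
  rw [hg, csmul, csmul, csmul, ← add_smul, ← sub_smul]
  congr 1
  simp only [map_add, map_mul, map_ofNat, map_intCast]
  ring

set_option synthInstance.maxHeartbeats 1000000 in
set_option maxHeartbeats 2000000 in
/-- For even `l ≤ −6`, the class of `t^l u dt` equals `P_{−4,−l−4}·ω₋₄ + P_{−2,−l−4}·ω₋₂`. -/
theorem stmt11 (c : ℂ) (P4 P2 : ℤ → ℂ)
    (h44 : P4 (-4) = 1) (h43 : P4 (-3) = 0) (h42 : P4 (-2) = 0) (h41 : P4 (-1) = 0)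
    (h24 : P2 (-4) = 0) (h23 : P2 (-3) = 0) (h22 : P2 (-2) = 1) (h21 : P2 (-1) = 0)
    (hrec4 : ∀ k : ℤ, 0 ≤ k →
      ((6 : ℂ) + 2 * (k : ℂ)) * P4 k = 4 * (k : ℂ) * c * P4 (k - 2) - 2 * ((k : ℂ) - 3) * P4 (k - 4))
    (hrec2 : ∀ k : ℤ, 0 ≤ k →
      ((6 : ℂ) + 2 * (k : ℂ)) * P2 k = 4 * (k : ℂ) * c * P2 (k - 2) - 2 * ((k : ℂ) - 3) * P2 (k - 4)) :
    ∀ l : ℤ, l ≤ -6 → Even l → w c l = P4 (-l - 4) • w c (-4) + P2 (-l - 4) • w c (-2) := by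
  have hP40 : P4 0 = 1 := by
    have h := hrec4 0 le_rfl
    norm_num [h44, h42] at h
    exact h
  have hP20 : P2 0 = 0 := by
    have h := hrec2 0 le_rfl
    norm_num [h24, h22] at h
    exact h
  -- Q n : w c (-2 - 2n) = P4 (2n-2) • w c (-4) + P2 (2n-2) • w c (-2)
  have key : ∀ n : ℕ, (w c (-2 - 2*(n:ℤ)) =
        P4 (2*(n:ℤ) - 2) • w c (-4) + P2 (2*(n:ℤ) - 2) • w c (-2))
      ∧ (w c (-2 - 2*((n:ℤ)+1)) =
        P4 (2*((n:ℤ)+1) - 2) • w c (-4) + P2 (2*((n:ℤ)+1) - 2) • w c (-2)) := by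
    intro n
    induction n with
    | zero =>
        constructor
        · norm_num [h42, h22]
        · norm_num [hP40, hP20]
    | succ n ih =>
        refine ⟨ih.2, ?_⟩
        push_cast
        obtain ⟨qn, qn1⟩ := ih
        -- use rel with k = -5 - 2n
        have hk := rel c (-5 - 2*(n:ℤ))
        rw [show (-5 - 2*(n:ℤ) + 3) = -2 - 2*(n:ℤ) by ring,
          show (-5 - 2*(n:ℤ) + 1) = -2 - 2*((n:ℤ)+1) by ring,
          show (-5 - 2*(n:ℤ) - 1) = -2 - 2*((n:ℤ)+1+1) by ring,
          qn, qn1] at hk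
    -- solve for w c (-2 - 2*(n+2))
        have hkne : ((-5 - 2*(n:ℤ) : ℤ) : ℂ) ≠ 0 := by
          rw [Int.cast_ne_zero]; omega
        push_cast at hkne hk
        have hsolve : w c (-2 - 2*((n:ℤ)+1+1)) =
            ((-5 - 2*(n:ℂ))⁻¹ * (2*c*((-5 - 2*(n:ℂ))+3))) •
              (P4 (2*((n:ℤ)+1) - 2) • w c (-4) + P2 (2*((n:ℤ)+1) - 2) • w c (-2))
            - ((-5 - 2*(n:ℂ))⁻¹ * ((-5 - 2*(n:ℂ))+6)) •
              (P4 (2*(n:ℤ) - 2) • w c (-4) + P2 (2*(n:ℤ) - 2) • w c (-2)) := by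
          have := congrArg (fun x => ((-5 - 2*(n:ℂ))⁻¹) • x) hk.symm
          simp only [smul_sub, smul_smul] at this
          rw [inv_mul_cancel₀ hkne, one_smul] at this
          rw [eq_sub_iff_add_eq, ← this]
          ring_nf
          abel
        rw [hsolve]
        have hj := hrec4 (2*(n:ℤ)+2) (by omega)
        have hj2 := hrec2 (2*(n:ℤ)+2) (by omega)
        rw [show (2*(n:ℤ)+2-2) = 2*(n:ℤ) by ring, show (2*(n:ℤ)+2-4) = 2*(n:ℤ)-2 by ring]
          at hj hj2
        push_cast at hj hj2
        rw [show (2*((n:ℤ)+1+1) - 2) = 2*(n:ℤ)+2 by ring,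
          show (2*((n:ℤ)+1) - 2) = 2*(n:ℤ) by ring]
        match_scalars
        · field_simp
          linear_combination (2:ℂ)⁻¹ * hj
        · field_simp
          linear_combination (2:ℂ)⁻¹ * hj2
  intro l hl hev
  obtain ⟨n, hn⟩ : ∃ n : ℕ, l = -2 - 2*(n:ℤ) := by
    obtain ⟨r, hr⟩ := hev
    exact ⟨(-(l+2)/2).toNat, by omega⟩
  subst hn
  rw [show (-(-2 - 2*(n:ℤ)) - 4) = 2*(n:ℤ) - 2 by ring]
  exact (key n).1
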